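/- arXiv:1605.00180 — 5 statements merged into one kernel-verified Lean document; each statement's English description precedes it below -/
import Mathlib

section
/- If x, y, u, w are integers with 0 < x ≤ n, 0 < u ≤ n, y > n²/2, and x² + y² = u² + w², with y, w nonnegative, then x = u and y = w. -/
theorem stmt0 (n x y u w : ℤ) (hn : 0 < n)
    (hx1 : 0 < x) (hx2 : x ≤ n) (hu1 : 0 < u) (hu2 : u ≤ n)
    (hy : 2 * y > n ^ 2) (hy0 : 0 ≤ y) (hw0 : 0 ≤ w)
    (h : x ^ 2 + y ^ 2 = u ^ 2 + w ^ 2) : x = u ∧ y = w := by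
  have hyw : y = w := by
    rcases lt_trichotomy y w with hlt | heq | hgt
    · exfalso
      have h1 : y + 1 ≤ w := hlt
      nlinarith [sq_nonneg (y - w), mul_pos hx1 hx1, mul_le_mul hu2 hu2 hu1.le hn.le]
    · exact heq
    · exfalso
      have h1 : w + 1 ≤ y := hgt
      nlinarith [mul_pos hu1 hu1, mul_le_mul hx2 hx2 hx1.le hn.le]
  refine ⟨?_, hyw⟩
  have : x ^ 2 = u ^ 2 := by nlinarith
  nlinarith [sq_nonneg (x - u), sq_nonneg (x + u)]
end

section
/- If x, y, u, w are integers with 0 ≤ x ≤ n, 0 ≤ u ≤ n, 2y > n² + 1, w ≥ 0, and x² + y² = u² + w², then x = u and y = w. -/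
theorem stmt1 (n x y u w : ℤ) (hn : 0 < n)
    (hx1 : 0 ≤ x) (hx2 : x ≤ n) (hu1 : 0 ≤ u) (hu2 : u ≤ n)
    (hy : 2 * y > n ^ 2 + 1) (hy0 : 0 ≤ y) (hw0 : 0 ≤ w)
    (h : x ^ 2 + y ^ 2 = u ^ 2 + w ^ 2) : x = u ∧ y = w := by
  have hyw : y = w := by
    rcases lt_trichotomy y w with h1 | h1 | h1
    · exfalso
      have : y + 1 ≤ w := h1
      nlinarith [mul_le_mul hx2 hx2 hx1 hn.le, mul_nonneg hu1 hu1, mul_nonneg hy0 hy0]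
    · exact h1
    · exfalso
      have : w + 1 ≤ y := h1
      nlinarith [mul_le_mul hu2 hu2 hu1 hn.le, mul_nonneg hx1 hx1, mul_nonneg hw0 hw0]
  subst hyw
  have hx : x = u := by
    have h2 : x ^ 2 = u ^ 2 := by linarith
    rcases lt_trichotomy x u with h3 | h3 | h3
    · nlinarith
    · exact h3
    · nlinarith
  exact ⟨hx, rfl⟩
end

section
/- With T(n,k) as defined, T(n,2) = n for all integers n > 3. -/
/-- Squared Euclidean distance between two integer points. -/
def dsq (p q : ℤ × ℤ) : ℤ := (p.1 - q.1) ^ 2 + (p.2 - q.2) ^ 2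

/-- Three points are collinear (zero-area triangle). -/
def Collin (p q r : ℤ × ℤ) : Prop :=
  (q.1 - p.1) * (r.2 - p.2) = (r.1 - p.1) * (q.2 - p.2)

/-- No three points of `S` are the vertices of an isosceles triangle of nonzero area. -/
def IsoFree (S : Finset (ℤ × ℤ)) : Prop :=
  ∀ p ∈ S, ∀ q ∈ S, ∀ r ∈ S, p ≠ q → p ≠ r → q ≠ r → ¬ Collin p q r →
    ¬ (dsq p q = dsq p r ∨ dsq p q = dsq q r ∨ dsq p r = dsq q r)

/-- The `n × k` grid `{1,…,n} × {1,…,k}` in `ℤ²`. -/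
noncomputable def grid (n k : ℕ) : Finset (ℤ × ℤ) := Finset.Icc 1 (n : ℤ) ×ˢ Finset.Icc 1 (k : ℤ)

/-- Maximum size of an isosceles-triangle-free subset of the `n × k` grid. -/
noncomputable def T (n k : ℕ) : ℕ :=
  sSup {N | ∃ S : Finset (ℤ × ℤ), S ⊆ grid n k ∧ IsoFree S ∧ S.card = N}

lemma iso1 {S : Finset (ℤ × ℤ)} (hS : IsoFree S) {x y a b : ℤ}
    (h1 : (x, a) ∈ S) (h2 : (x, b) ∈ S) (h3 : (y, a) ∈ S)
    (hab : (a - b) ^ 2 = 1) (hxy : (x - y) ^ 2 = 1) : False := by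
  have hxy' : x ≠ y := by rintro rfl; simp at hxy
  have hab' : a ≠ b := by rintro rfl; simp at hab
  refine hS (x, a) h1 (x, b) h2 (y, a) h3 ?_ ?_ ?_ ?_ ?_
  · simp [Prod.ext_iff, hab']
  · simp [Prod.ext_iff, hxy']
  · simp [Prod.ext_iff]; intro h; exact absurd h hxy'
  · intro h
    unfold Collin at h
    simp only at h
    have h0 : (y - x) * (b - a) = 0 := by linear_combination -h
    rcases mul_eq_zero.mp h0 with h' | h'
    · exact hxy' (by linarith)
    · exact hab' (by linarith)
  · left
    unfold dsq
    simp only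
    linear_combination hab - hxy

lemma iso2 {S : Finset (ℤ × ℤ)} (hS : IsoFree S)
    (h1 : ((1 : ℤ), (1 : ℤ)) ∈ S) (h5 : ((5 : ℤ), (1 : ℤ)) ∈ S)
    (h3 : ((3 : ℤ), (2 : ℤ)) ∈ S) : False := by
  refine hS (3, 2) h3 (1, 1) h1 (5, 1) h5 (by decide) (by decide) (by decide)
    (by norm_num [Collin]) (Or.inl (by norm_num [dsq]))

lemma key {n : ℕ} (hn : 3 < n) {S : Finset (ℤ × ℤ)}
    (hsub : S ⊆ grid n 2) (hS : IsoFree S) : S.card ≤ n := by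
  classical
  have hn4 : (4 : ℤ) ≤ (n : ℤ) := by exact_mod_cast hn
  set A : Finset ℤ := (Finset.Icc 1 (n : ℤ)).filter (fun x => (x, 1) ∈ S) with hA
  set B : Finset ℤ := (Finset.Icc 1 (n : ℤ)).filter (fun x => (x, 2) ∈ S) with hB
  have hmemA : ∀ x : ℤ, x ∈ A ↔ (1 ≤ x ∧ x ≤ n ∧ (x, 1) ∈ S) := by
    intro x; simp [hA, Finset.mem_filter, Finset.mem_Icc, and_assoc]
  have hmemB : ∀ x : ℤ, x ∈ B ↔ (1 ≤ x ∧ x ≤ n ∧ (x, 2) ∈ S) := by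
    intro x; simp [hB, Finset.mem_filter, Finset.mem_Icc, and_assoc]
  have hrow : ∀ p ∈ S, (1 ≤ p.1 ∧ p.1 ≤ n ∧ (p.2 = 1 ∨ p.2 = 2)) := by
    intro p hp
    have h := hsub hp
    simp only [grid, Finset.mem_product, Finset.mem_Icc] at h
    push_cast at h
    omega
  have hScard : S.card = A.card + B.card := by
    have himg : S = A.image (fun x => (x, (1 : ℤ))) ∪ B.image (fun x => (x, (2 : ℤ))) := by
      ext p
      simp only [Finset.mem_union, Finset.mem_image, hmemA, hmemB]
      constructor
      · intro hp
        rcases hrow p hp with ⟨hl, hr, h1 | h2⟩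
        · exact Or.inl ⟨p.1, ⟨hl, hr, by rwa [← h1, Prod.mk.eta]⟩, by rw [← h1]⟩
        · exact Or.inr ⟨p.1, ⟨hl, hr, by rwa [← h2, Prod.mk.eta]⟩, by rw [← h2]⟩
      · rintro (⟨x, ⟨_, _, hx⟩, rfl⟩ | ⟨x, ⟨_, _, hx⟩, rfl⟩) <;> exact hx
    have hdisj : Disjoint (A.image (fun x => (x, (1 : ℤ))))
        (B.image (fun x => (x, (2 : ℤ)))) := by
      rw [Finset.disjoint_left]
      rintro p hp hq
      obtain ⟨x, _, rfl⟩ := Finset.mem_image.mp hp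
      obtain ⟨y, _, hy⟩ := Finset.mem_image.mp hq
      exact absurd (congrArg Prod.snd hy) (by norm_num)
    rw [himg, Finset.card_union_of_disjoint hdisj,
      Finset.card_image_of_injective _ (fun a b h => by simpa using h),
      Finset.card_image_of_injective _ (fun a b h => by simpa using h)]
  set U : Finset ℤ := A ∪ B with hU
  set F : Finset ℤ := A ∩ B with hF
  set E : Finset ℤ := (Finset.Icc 1 (n : ℤ)) \ U with hE
  have hUsub : U ⊆ Finset.Icc 1 (n : ℤ) :=
    Finset.union_subset (Finset.filter_subset _ _) (Finset.filter_subset _ _)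
  have hcards : A.card + B.card = U.card + F.card :=
    (Finset.card_union_add_card_inter A B).symm
  have hEU : E.card + U.card = n := by
    rw [hE, Finset.card_sdiff_add_card_eq_card hUsub, Int.card_Icc]
    simp
  have hFU : F ⊆ U := Finset.inter_subset_union
  have hFmem : ∀ x ∈ F, (x, (1 : ℤ)) ∈ S ∧ (x, (2 : ℤ)) ∈ S ∧ 1 ≤ x ∧ x ≤ n := by
    intro x hx
    rw [hF, Finset.mem_inter, hmemA x, hmemB x] at hx
    exact ⟨hx.1.2.2, hx.2.2.2, hx.1.1, hx.1.2.1⟩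
  have hnear : ∀ x ∈ F, ∀ y : ℤ, (x - y) ^ 2 = 1 → y ∉ U := by
    intro x hx y hxy hyU
    obtain ⟨hx1, hx2, _, _⟩ := hFmem x hx
    rcases Finset.mem_union.mp hyU with hy | hy
    · exact iso1 hS hx1 hx2 ((hmemA y).mp hy).2.2 (by norm_num) hxy
    · exact iso1 hS hx2 hx1 ((hmemB y).mp hy).2.2 (by norm_num) hxy
  have hEmem : ∀ x ∈ F, ∀ y : ℤ, (x - y) ^ 2 = 1 → 1 ≤ y → y ≤ n → y ∈ E := by
    intro x hx y h hy1 hy2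
    exact Finset.mem_sdiff.mpr ⟨Finset.mem_Icc.mpr ⟨hy1, hy2⟩, hnear x hx y h⟩
  suffices hFE : F.card ≤ E.card by omega
  by_cases h1 : (1 : ℤ) ∈ F
  · by_cases h3 : (3 : ℤ) ∈ F
    · by_cases h5 : (5 : ℤ) ∈ F
      · exact (iso2 hS (hFmem 1 h1).1 (hFmem 5 h5).1 (hFmem 3 h3).2.1).elim
      · -- 1, 3 ∈ F, 5 ∉ F
        have hb : ∀ x ∈ F, x = 1 ∨ x = 3 ∨ 6 ≤ x := by
          intro x hx
          obtain ⟨_, _, hxl, _⟩ := hFmem x hx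
          have e2 : x ≠ 2 := fun e => hnear 1 h1 2 (by norm_num) (hFU (e ▸ hx))
          have e4 : x ≠ 4 := fun e => hnear 3 h3 4 (by norm_num) (hFU (e ▸ hx))
          have e5 : x ≠ 5 := fun e => h5 (e ▸ hx)
          omega
        apply Finset.card_le_card_of_injOn
          (fun x => if x = 1 then 2 else if x = 3 then 4 else x - 1)
        · intro x hx
          rcases hb x hx with rfl | rfl | hx6
          · simpa using hEmem 1 h1 2 (by norm_num) (by norm_num) (by omega)
          · simpa using hEmem 3 h3 4 (by norm_num) (by norm_num) (by omega)
          · have e1 : x ≠ 1 := by omega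
            have e3 : x ≠ 3 := by omega
            simp only [if_neg e1, if_neg e3]
            obtain ⟨_, _, _, hxr⟩ := hFmem x hx
            exact hEmem x hx (x - 1) (by ring) (by omega) (by omega)
        · intro x hx y hy hxy
          simp only at hxy
          rcases hb x hx with rfl | rfl | hx6 <;> rcases hb y hy with rfl | rfl | hy6 <;>
            split_ifs at hxy <;> omega
    · -- 1 ∈ F, 3 ∉ F
      have hb : ∀ x ∈ F, x = 1 ∨ 4 ≤ x := by
        intro x hx
        obtain ⟨_, _, hxl, _⟩ := hFmem x hx
        have e2 : x ≠ 2 := fun e => hnear 1 h1 2 (by norm_num) (hFU (e ▸ hx))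
        have e3 : x ≠ 3 := fun e => h3 (e ▸ hx)
        omega
      apply Finset.card_le_card_of_injOn (fun x => if x = 1 then 2 else x - 1)
      · intro x hx
        rcases hb x hx with rfl | hx4
        · simpa using hEmem 1 h1 2 (by norm_num) (by norm_num) (by omega)
        · have e1 : x ≠ 1 := by omega
          simp only [if_neg e1]
          obtain ⟨_, _, _, hxr⟩ := hFmem x hx
          exact hEmem x hx (x - 1) (by ring) (by omega) (by omega)
      · intro x hx y hy hxy
        simp only at hxy
        rcases hb x hx with rfl | hx4 <;> rcases hb y hy with rfl | hy4 <;>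
          split_ifs at hxy <;> omega
  · -- 1 ∉ F
    apply Finset.card_le_card_of_injOn (fun x => x - 1)
    · intro x hx
      obtain ⟨_, _, hxl, hxr⟩ := hFmem x hx
      have e1 : x ≠ 1 := fun e => h1 (e ▸ hx)
      exact hEmem x hx (x - 1) (by ring) (by omega) (by omega)
    · intro x _ y _ hxy
      dsimp only at hxy
      omega

theorem stmt11 (n : ℕ) (hn : 3 < n) : T n 2 = n := by
  have hub : ∀ N ∈ {N | ∃ S : Finset (ℤ × ℤ), S ⊆ grid n 2 ∧ IsoFree S ∧ S.card = N},
      N ≤ n := by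
    rintro N ⟨S, hsub, hiso, rfl⟩
    exact key hn hsub hiso
  have hmem : n ∈ {N | ∃ S : Finset (ℤ × ℤ), S ⊆ grid n 2 ∧ IsoFree S ∧ S.card = N} := by
    refine ⟨(Finset.Icc 1 (n : ℤ)).image (fun x => (x, 1)), ?_, ?_, ?_⟩
    · intro p hp
      obtain ⟨x, hx, rfl⟩ := Finset.mem_image.mp hp
      rw [Finset.mem_Icc] at hx
      simp only [grid, Finset.mem_product, Finset.mem_Icc]
      refine ⟨⟨hx.1, hx.2⟩, by norm_num⟩
    · intro p hp q hq r hr _ _ _ hncol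
      obtain ⟨xp, _, rfl⟩ := Finset.mem_image.mp hp
      obtain ⟨xq, _, rfl⟩ := Finset.mem_image.mp hq
      obtain ⟨xr, _, rfl⟩ := Finset.mem_image.mp hr
      exact absurd (by unfold Collin; ring) hncol
    · rw [Finset.card_image_of_injective _ (fun a b h => by simpa using h), Int.card_Icc]
      simp
  exact le_antisymm (csSup_le' hub) (le_csSup ⟨n, hub⟩ hmem)
end

section
/- For odd n > 4, the set of n + 1 points {(1,i) : 2 ≤ i ≤ n} ∪ {(2,1), (3,1)} in the n × 3 grid contains no three points that form an isosceles triangle of nonzero area; hence T(n,3) ≥ n + 1. -/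
lemma key1 (a b : ℤ) (ha : 2 ≤ a) (hb : 2 ≤ b) (h : (a-b)^2 = 1 + (a-1)^2) : False := by
  have h1 : (1-b)*(2*a-b-1) = 1 := by linear_combination h
  rcases Int.eq_one_or_neg_one_of_mul_eq_one' h1 with ⟨h2,h3⟩|⟨h2,h3⟩ <;> omega

lemma key2 (a b : ℤ) (ha : 2 ≤ a) (hb : 2 ≤ b) (h : (a-b)^2 = 4 + (a-1)^2) : False := by
  have h1 : (b-1)*(b+1-2*a) = 4 := by linear_combination h
  have hpos : 0 < b + 1 - 2*a := by nlinarith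
  have hle : b ≤ 5 := by nlinarith
  interval_cases b <;> omega

lemma key3 (a b : ℤ) (ha : 2 ≤ a) (hb : 2 ≤ b) (hne : a ≠ b) (h : (a-1)^2 = (b-1)^2) :
    False := by
  have h1 : (a-b)*(a+b-2) = 0 := by linear_combination h
  rcases mul_eq_zero.mp h1 with h2 | h2 <;> omega

lemma key5 (x : ℤ) (hx : 2 ≤ x) (h : (x-1)^2 = 0) : False := by nlinarith
lemma key6 (x : ℤ) (h : (x-1)^2 = -3) : False := by nlinarith [sq_nonneg (x-1)]
lemma key0 (h : (0:ℤ) = 3) : False := by norm_num at h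

lemma collin_col (x y z : ℤ) : Collin (1,x) (1,y) (1,z) := by simp [Collin]

lemma isoS (n : ℕ) :
    IsoFree ((Finset.Icc (2 : ℤ) (n : ℤ)).image (fun i => ((1 : ℤ), i)) ∪
      {((2 : ℤ), (1 : ℤ)), ((3 : ℤ), (1 : ℤ))}) := by
  intro p hp q hq r hr hpq hpr hqr hcol hiso
  simp only [Finset.mem_union, Finset.mem_image, Finset.mem_insert, Finset.mem_singleton,
    Finset.mem_Icc] at hp hq hr
  obtain ⟨a, ⟨ha2, han⟩, rfl⟩ | rfl | rfl := hp <;>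
  obtain ⟨b, ⟨hb2, hbn⟩, rfl⟩ | rfl | rfl := hq <;>
  obtain ⟨c, ⟨hc2, hcn⟩, rfl⟩ | rfl | rfl := hr <;>
  simp only [dsq] at hiso <;>
  first
    | exact hpq rfl
    | exact hpr rfl
    | exact hqr rfl
    | exact absurd (collin_col a b c) hcol
    | (rcases hiso with h|h|h <;>
(first
          | exact key1 a b ha2 hb2 (by linear_combination h)
          | exact key2 a b ha2 hb2 (by linear_combination h)
          | exact key1 a b ha2 hb2 (by linear_combination -h)
          | exact key2 a b ha2 hb2 (by linear_combination -h)
          | exact key1 b a hb2 ha2 (by linear_combination h)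
          | exact key2 b a hb2 ha2 (by linear_combination h)
          | exact key1 b a hb2 ha2 (by linear_combination -h)
          | exact key2 b a hb2 ha2 (by linear_combination -h)
          | exact key3 a b ha2 hb2 (by simpa using hpq) (by linear_combination h)
          | exact key3 a b ha2 hb2 (by simpa using hpq) (by linear_combination -h)
          | exact key1 a c ha2 hc2 (by linear_combination h)
          | exact key2 a c ha2 hc2 (by linear_combination h)
          | exact key1 a c ha2 hc2 (by linear_combination -h)
          | exact key2 a c ha2 hc2 (by linear_combination -h)
          | exact key1 c a hc2 ha2 (by linear_combination h)
          | exact key2 c a hc2 ha2 (by linear_combination h)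
          | exact key1 c a hc2 ha2 (by linear_combination -h)
          | exact key2 c a hc2 ha2 (by linear_combination -h)
          | exact key3 a c ha2 hc2 (by simpa using hpr) (by linear_combination h)
          | exact key3 a c ha2 hc2 (by simpa using hpr) (by linear_combination -h)
          | exact key1 b c hb2 hc2 (by linear_combination h)
          | exact key2 b c hb2 hc2 (by linear_combination h)
          | exact key1 b c hb2 hc2 (by linear_combination -h)
          | exact key2 b c hb2 hc2 (by linear_combination -h)
          | exact key1 c b hc2 hb2 (by linear_combination h)
          | exact key2 c b hc2 hb2 (by linear_combination h)
          | exact key1 c b hc2 hb2 (by linear_combination -h)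
          | exact key2 c b hc2 hb2 (by linear_combination -h)
          | exact key3 b c hb2 hc2 (by simpa using hqr) (by linear_combination h)
          | exact key3 b c hb2 hc2 (by simpa using hqr) (by linear_combination -h)
          | exact key5 a ha2 (by linear_combination h)
          | exact key6 a (by linear_combination h)
          | exact key5 a ha2 (by linear_combination -h)
          | exact key6 a (by linear_combination -h)
          | exact key5 b hb2 (by linear_combination h)
          | exact key6 b (by linear_combination h)
          | exact key5 b hb2 (by linear_combination -h)
          | exact key6 b (by linear_combination -h)
          | exact key5 c hc2 (by linear_combination h)
          | exact key6 c (by linear_combination h)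
          | exact key5 c hc2 (by linear_combination -h)
          | exact key6 c (by linear_combination -h)
          | exact key0 (by linear_combination h)
          | exact key0 (by linear_combination -h)))

lemma iso_swap {S : Finset (ℤ × ℤ)} (hS : IsoFree S) : IsoFree (S.image Prod.swap) := by
  intro p hp q hq r hr hpq hpr hqr hcol hiso
  simp only [Finset.mem_image] at hp hq hr
  obtain ⟨p', hp', rfl⟩ := hp
  obtain ⟨q', hq', rfl⟩ := hq
  obtain ⟨r', hr', rfl⟩ := hr
  refine hS p' hp' q' hq' r' hr' (fun h => hpq (by rw [h])) (fun h => hpr (by rw [h]))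
    (fun h => hqr (by rw [h])) (fun h => hcol ?_) ?_
  · unfold Collin at h ⊢
    simp only [Prod.fst_swap, Prod.snd_swap]
    linear_combination -h
  · simpa only [dsq, Prod.fst_swap, Prod.snd_swap, add_comm] using hiso

theorem stmt12 (n : ℕ) (hn : 4 < n) (hodd : Odd n) :
    IsoFree ((Finset.Icc (2 : ℤ) (n : ℤ)).image (fun i => ((1 : ℤ), i)) ∪
      {((2 : ℤ), (1 : ℤ)), ((3 : ℤ), (1 : ℤ))}) ∧ n + 1 ≤ T n 3 := by
  set S : Finset (ℤ × ℤ) :=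
    (Finset.Icc (2 : ℤ) (n : ℤ)).image (fun i => ((1 : ℤ), i)) ∪
      {((2 : ℤ), (1 : ℤ)), ((3 : ℤ), (1 : ℤ))} with hSdef
  have hfree : IsoFree S := isoS n
  refine ⟨hfree, ?_⟩
  have hn5 : (5 : ℤ) ≤ (n : ℤ) := by exact_mod_cast hn
  have h2 : ({((2:ℤ),(1:ℤ)), ((3:ℤ),(1:ℤ))} : Finset (ℤ × ℤ)).card = 2 := by
    rw [Finset.card_insert_of_notMem (by simp), Finset.card_singleton]
  have hdisj : Disjoint ((Finset.Icc (2 : ℤ) (n : ℤ)).image (fun i => ((1 : ℤ), i)))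
      ({((2:ℤ),(1:ℤ)), ((3:ℤ),(1:ℤ))} : Finset (ℤ × ℤ)) := by
    simp only [Finset.disjoint_left, Finset.mem_image, Finset.mem_insert,
      Finset.mem_singleton, Finset.mem_Icc]
    rintro p ⟨i, hi, rfl⟩ (h | h) <;> simp_all
  have hinj : Function.Injective (fun i : ℤ => ((1 : ℤ), i)) := by
    intro i j hij; simpa using hij
  have hcard : S.card = n + 1 := by
    rw [hSdef, Finset.card_union_of_disjoint hdisj, Finset.card_image_of_injective _ hinj,
      Int.card_Icc, h2]
    omega
  have hmem : (n + 1) ∈ {N | ∃ S : Finset (ℤ × ℤ), S ⊆ grid n 3 ∧ IsoFree S ∧ S.card = N} := by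
    refine ⟨S.image Prod.swap, ?_, iso_swap hfree, ?_⟩
    · intro p hp
      simp only [Finset.mem_image, hSdef, Finset.mem_union, Finset.mem_insert,
        Finset.mem_singleton, Finset.mem_Icc] at hp
      obtain ⟨q, (⟨i, hi, rfl⟩ | rfl | rfl), rfl⟩ := hp <;>
        simp only [grid, Finset.mem_product, Finset.mem_Icc, Prod.fst_swap, Prod.snd_swap] <;>
        constructor <;> constructor <;> omega
    · rw [Finset.card_image_of_injective _ Prod.swap_injective, hcard]
  have hbdd : BddAbove {N | ∃ S : Finset (ℤ × ℤ), S ⊆ grid n 3 ∧ IsoFree S ∧ S.card = N} := by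
    refine ⟨(grid n 3).card, ?_⟩
    rintro N ⟨S', hsub, _, rfl⟩
    exact Finset.card_le_card hsub
  exact le_csSup hbdd hmem
end

section
/- If k > (n-1)² + 1 and three points (0, y₁), (x, y₂), (k-1, y₃) with 0 ≤ y₁, y₂, y₃ ≤ n-1 and 0 < x < k-1 form an isosceles triangle with the two edges incident to the middle point equal in length, then y₁ = y₃, y₂ ≠ y₁, and 2x = k - 1 (so k must be odd). -/
theorem stmt15 (n k x y₁ y₂ y₃ : ℤ) (hn : 2 ≤ n) (hk : k > (n - 1) ^ 2 + 1)
    (h1 : 0 ≤ y₁) (h1n : y₁ ≤ n - 1) (h2 : 0 ≤ y₂) (h2n : y₂ ≤ n - 1)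
    (h3 : 0 ≤ y₃) (h3n : y₃ ≤ n - 1) (hx1 : 0 < x) (hx2 : x < k - 1)
    (harea : ¬ Collin (0, y₁) (x, y₂) (k - 1, y₃))
    (hiso : dsq (0, y₁) (x, y₂) = dsq (x, y₂) (k - 1, y₃)) :
    y₁ = y₃ ∧ y₂ ≠ y₁ ∧ 2 * x = k - 1 := by
  simp only [dsq] at hiso
  simp only [Collin] at harea
  have key : (k - 1) * (2 * x - (k - 1)) = (y₂ - y₃) ^ 2 - (y₁ - y₂) ^ 2 := by
    ring_nf
    ring_nf at hiso
    linarith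
  have hb1 : (y₂ - y₃) ^ 2 ≤ (n - 1) ^ 2 := sq_le_sq' (by linarith) (by linarith)
  have hb2 : (y₁ - y₂) ^ 2 ≤ (n - 1) ^ 2 := sq_le_sq' (by linarith) (by linarith)
  have hp1 : 0 ≤ (y₂ - y₃) ^ 2 := sq_nonneg _
  have hp2 : 0 ≤ (y₁ - y₂) ^ 2 := sq_nonneg _
  have hkpos : 0 < k - 1 := by nlinarith [sq_nonneg (n - 1)]
  have hd : 2 * x - (k - 1) = 0 := by
    by_contra hd
    rcases lt_or_gt_of_ne hd with h | h
    · nlinarith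
    · nlinarith
  have hx : 2 * x = k - 1 := by linarith
  rw [hd, mul_zero] at key
  have hsq : (y₂ - y₃) ^ 2 = (y₁ - y₂) ^ 2 := by linarith
  have hfac : (y₂ - y₃ - (y₁ - y₂)) * (y₂ - y₃ + (y₁ - y₂)) = 0 := by linear_combination hsq
  rcases mul_eq_zero.mp hfac with h | h
  · -- y₂ - y₃ = y₁ - y₂ : collinear, contradiction
    exfalso
    apply harea
    have : y₃ - y₁ = 2 * (y₂ - y₁) := by linarith
    rw [sub_zero, sub_zero, this, ← hx]
    ring
  · have hy : y₁ = y₃ := by linarith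
    refine ⟨hy, ?_, hx⟩
    intro h21
    apply harea
    simp only [sub_zero]
    rw [← hy, h21]
    ring
end
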